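/- Let X be an infinite exchangeable sequence of {0,1}-valued random variables. Then X is non-deterministic (i.e., its de Finetti measure is not supported in {0} ∪ {1}) if and only if SH_k(X_[n]) ≠ {0} for every n ≥ 2 and every k = 1,…,n. -/

import Mathlib

open MeasureTheory

namespace HoeffdingUrn

variable {Ω : Type} [MeasurableSpace Ω]

/-- `X` is an exchangeable sequence under `μ`: each `X i` is measurable and, for every `n`
and every permutation `π` of `{0,…,n-1}`, the law of `(X_{π 0},…,X_{π (n-1)})` coincides with
the law of `(X_0,…,X_{n-1})`. -/
def Exchangeable {D : Type} [MeasurableSpace D] (X : ℕ → Ω → D) (μ : Measure Ω) : Prop :=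
  (∀ i, Measurable (X i)) ∧
  ∀ (n : ℕ) (π : Equiv.Perm (Fin n)),
    Measure.map (fun ω (i : Fin n) => X ((π i : Fin n) : ℕ) ω) μ =
      Measure.map (fun ω (i : Fin n) => X (i : ℕ) ω) μ

/-- probability that the first `n` variables equal the vector `x`. -/
noncomputable def cylProb {D : Type} (X : ℕ → Ω → D) (μ : Measure Ω) {n : ℕ}
    (x : Fin n → D) : ℝ :=
  (μ {ω | ∀ i : Fin n, X (i : ℕ) ω = x i}).toReal

/-- `X` is non-deterministic: every finite configuration has positive probability. -/
def NonDeterministic {D : Type} (X : ℕ → Ω → D) (μ : Measure Ω) : Prop :=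
  ∀ n : ℕ, 1 ≤ n → ∀ x : Fin n → D, 0 < cylProb X μ x

/-- the canonical vector of `{0,1}ⁿ` (with `false` = 0) containing exactly `j` zeros. -/
def zeroVec (n j : ℕ) : Fin n → Bool := fun i => decide (j ≤ (i : ℕ))

/-- number of zeros (`false` entries) in a Boolean vector. -/
def zeroCountVec {n : ℕ} (x : Fin n → Bool) : ℕ :=
  (Finset.univ.filter fun i => x i = false).card

/-- `P_n(0^{(j)})`: the common probability of any configuration of `(X_1,…,X_n)` with
exactly `j` zeros. -/
noncomputable def Pz (X : ℕ → Ω → Bool) (μ : Measure Ω) (n j : ℕ) : ℝ :=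
  cylProb X μ (zeroVec n j)

/-- number of zeros among the first `n` variables. -/
def zeroCount (X : ℕ → Ω → Bool) (n : ℕ) (ω : Ω) : ℕ :=
  zeroCountVec (fun i : Fin n => X (i : ℕ) ω)

/-- `P^n_{n+v}(0^{(b)} ∣ 0^{(a)})`: conditional probability that `(X_1,…,X_{n+v})`
contains exactly `b` zeros given that `(X_1,…,X_n)` contains exactly `a` zeros. -/
noncomputable def condP (X : ℕ → Ω → Bool) (μ : Measure Ω) (n v b a : ℕ) : ℝ :=
  (μ {ω | zeroCount X (n + v) ω = b ∧ zeroCount X n ω = a}).toReal /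
    (μ {ω | zeroCount X n ω = a}).toReal

/-- a symmetric function of `k` variables. -/
def SymmFun {D : Type} {k : ℕ} (φ : (Fin k → D) → ℝ) : Prop :=
  ∀ (π : Equiv.Perm (Fin k)) (x : Fin k → D), φ (x ∘ π) = φ x

open Classical in
/-- the symmetric `U`-statistic with kernel `φ` of order `k`, based on `(X_1,…,X_n)`:
`F = ∑_{1 ≤ j₁ < … < j_k ≤ n} φ(X_{j₁},…,X_{j_k})`. -/
noncomputable def Ustat {D : Type} (X : ℕ → Ω → D) (n : ℕ) {k : ℕ}
    (φ : (Fin k → D) → ℝ) : Ω → ℝ :=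
  fun ω => ∑ j : Fin k → Fin n, if StrictMono j then φ (fun i => X ((j i : Fin n) : ℕ) ω) else 0

/-- complete degeneracy of the kernel `φ` of order `k`:
`E[φ(X_1,…,X_k) ∣ X_2,…,X_k] = 0` a.s. -/
def Degenerate {D : Type} [MeasurableSpace D] (X : ℕ → Ω → D) (μ : Measure Ω) {k : ℕ}
    (φ : (Fin k → D) → ℝ) : Prop :=
  μ[(fun ω => φ (fun i => X (i : ℕ) ω)) |
      MeasurableSpace.comap (fun ω (i : Fin (k - 1)) => X ((i : ℕ) + 1) ω) inferInstance]
    =ᵐ[μ] 0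

/-- `X` is Hoeffding decomposable: for every `n ≥ 2` and `1 ≤ k ≤ n`, a symmetric
`U`-statistic of order `k` based on `(X_1,…,X_n)` is orthogonal to `SU_{k-1}(X_{[n]})`
(equivalently, lies in `SH_k(X_{[n]})`) if and only if its kernel is completely degenerate. -/
def HoeffdingDecomposable {D : Type} [MeasurableSpace D] (X : ℕ → Ω → D) (μ : Measure Ω) :
    Prop :=
  ∀ n : ℕ, 2 ≤ n → ∀ k : ℕ, 1 ≤ k → k ≤ n → ∀ φ : (Fin k → D) → ℝ, SymmFun φ →
    ((∀ ψ : (Fin (k - 1) → D) → ℝ, SymmFun ψ →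
        ∫ ω, Ustat X n φ ω * Ustat X n ψ ω ∂μ = 0) ↔ Degenerate X μ φ)

/-- the symmetric Hoeffding spaces `SH_k(X_{[n]})`, `n ≥ 2`, `1 ≤ k ≤ n`, are all
non-trivial: each contains a `U`-statistic which is not a.s. zero. -/
def SHNontrivial {D : Type} (X : ℕ → Ω → D) (μ : Measure Ω) : Prop :=
  ∀ n : ℕ, 2 ≤ n → ∀ k : ℕ, 1 ≤ k → k ≤ n →
    ∃ φ : (Fin k → D) → ℝ, SymmFun φ ∧
      (∀ ψ : (Fin (k - 1) → D) → ℝ, SymmFun ψ →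
        ∫ ω, Ustat X n φ ω * Ustat X n ψ ω ∂μ = 0) ∧
      ∫ ω, (Ustat X n φ ω) ^ 2 ∂μ ≠ 0

/-- canonical symmetrization of a function of `m` variables. -/
noncomputable def symmetrize {D : Type} {m : ℕ} (f : (Fin m → D) → ℝ) : (Fin m → D) → ℝ :=
  fun x => (∑ π : Equiv.Perm (Fin m), f (x ∘ π)) / (Nat.factorial m : ℝ)

/-- the vector `(y_1,…,y_u,x_1,…,x_{n-u})` of length `n` (for `1 ≤ u ≤ n`). -/
noncomputable def headTail {D : Type} [Nonempty D] (u n : ℕ) (y : Fin u → D)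
    (x : Fin (n - 1) → D) : Fin n → D :=
  fun i =>
    if h : (i : ℕ) < u then y ⟨i, h⟩
    else if h2 : (i : ℕ) - u < n - 1 then x ⟨(i : ℕ) - u, h2⟩
    else Classical.arbitrary D

/-- `[T]^{(n-u)}_{n,n-1}`: the (version of the) conditional expectation
`E[T(X_1,…,X_n) ∣ X_{u+1},…,X_{u+n-1}]`, viewed as a function on `D^{n-1}`. -/
noncomputable def condProj {D : Type} [Fintype D] [Nonempty D] (X : ℕ → Ω → D)
    (μ : Measure Ω) (n u : ℕ) (T : (Fin n → D) → ℝ) : (Fin (n - 1) → D) → ℝ :=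
  fun x =>
    (∑ y : Fin u → D, T (headTail u n y x) * cylProb X μ (Fin.append y x)) / cylProb X μ x

/-- `X` is weakly independent: for every `n ≥ 2`, every symmetric `T : D^n → ℝ` with
`[T]^{(n-1)}_{n,n-1}(X_2,…,X_n) = 0` a.s. satisfies, for every `u = 2,…,n`,
`tilde-[T]^{(n-u)}_{n,n-1}(X_{u+1},…,X_{u+n-1}) = 0` a.s. -/
def WeaklyIndependent {D : Type} [Fintype D] [Nonempty D] (X : ℕ → Ω → D)
    (μ : Measure Ω) : Prop :=
  ∀ n : ℕ, 2 ≤ n → ∀ T : (Fin n → D) → ℝ, SymmFun T →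
    (∀ᵐ ω ∂μ, condProj X μ n 1 T (fun i : Fin (n - 1) => X ((i : ℕ) + 1) ω) = 0) →
    ∀ u : ℕ, 2 ≤ u → u ≤ n →
      ∀ᵐ ω ∂μ, symmetrize (condProj X μ n u T) (fun i : Fin (n - 1) => X (u + (i : ℕ)) ω) = 0

/-- `γ` is the de Finetti measure of the `{0,1}`-valued exchangeable sequence `X`. -/
def IsDeFinettiMeasure (X : ℕ → Ω → Bool) (μ : Measure Ω) (γ : Measure ℝ) : Prop :=
  IsProbabilityMeasure γ ∧ γ (Set.Icc (0 : ℝ) 1)ᶜ = 0 ∧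
  ∀ (n : ℕ) (x : Fin n → Bool),
    cylProb X μ x =
      ∫ θ, θ ^ (Finset.univ.filter fun i => x i = true).card *
        (1 - θ) ^ (Finset.univ.filter fun i => x i = false).card ∂γ

/-- the `n`-th moment of a measure on `[0,1] ⊆ ℝ`. -/
noncomputable def momentOf (γ : Measure ℝ) (n : ℕ) : ℝ := ∫ θ, θ ^ n ∂γ

/-- the Beta(a,b) distribution on `[0,1]`, with density `θ^{a-1}(1-θ)^{b-1}/B(a,b)`. -/
noncomputable def betaMeasure (a b : ℝ) : Measure ℝ :=
  (volume.restrict (Set.Ioo (0 : ℝ) 1)).withDensity fun θ =>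
    ENNReal.ofReal (θ ^ (a - 1) * (1 - θ) ^ (b - 1) /
      ∫ t in Set.Ioo (0 : ℝ) 1, t ^ (a - 1) * (1 - t) ^ (b - 1))

/-- the canonical completely degenerate kernel `φ_n^{(0)}` of order `n`:
`φ_n^{(0)}(0^{(k)}) = (-1)^k P_n(0^{(0)}) / P_n(0^{(k)})`. -/
noncomputable def phi0 (X : ℕ → Ω → Bool) (μ : Measure Ω) (n : ℕ) :
    (Fin n → Bool) → ℝ :=
  fun x => (-1 : ℝ) ^ zeroCountVec x * (Pz X μ n 0 / Pz X μ n (zeroCountVec x))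

/-- `f` is separately symmetric in its first `v` and last `m - v` variables. -/
def SepSymm {m : ℕ} (v : ℕ) (f : (Fin m → Bool) → ℝ) : Prop :=
  ∀ π : Equiv.Perm (Fin m), (∀ i : Fin m, (i : ℕ) < v ↔ ((π i : Fin m) : ℕ) < v) →
    ∀ x : Fin m → Bool, f (x ∘ π) = f x

/-- the canonical vector of `{0,1}^m` whose first `v` coordinates contain exactly `k`
zeros and whose last `m - v` coordinates contain exactly `l` zeros. -/
def blockVec (m v k l : ℕ) : Fin m → Bool :=
  fun i => if (i : ℕ) < v then decide (k ≤ (i : ℕ)) else decide (l ≤ (i : ℕ) - v)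

/-- `X` is an urn process in the sense of Hill, Lane and Sudderth: there are a measurable
`f : [0,1] → [0,1]` and positive integers `r`, `b` with
`P(X_{n+1} = 1 ∣ X_1,…,X_n) = f((r + X_1 + … + X_n)/(r + b + n))` a.s. for every `n ≥ 1`. -/
def IsUrnProcess (X : ℕ → Ω → Bool) (μ : Measure Ω) : Prop :=
  ∃ (f : ℝ → ℝ) (r b : ℕ), Measurable f ∧
    Set.MapsTo f (Set.Icc (0 : ℝ) 1) (Set.Icc (0 : ℝ) 1) ∧ 0 < r ∧ 0 < b ∧
    ∀ n : ℕ, 1 ≤ n →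
      (μ[(fun ω => if X n ω = true then (1 : ℝ) else 0) |
          MeasurableSpace.comap (fun ω (i : Fin n) => X (i : ℕ) ω) inferInstance]
        =ᵐ[μ] fun ω =>
          f (((r : ℝ) + ∑ i : Fin n, (if X (i : ℕ) ω = true then (1 : ℝ) else 0)) /
            ((r : ℝ) + (b : ℝ) + (n : ℝ))))

section Comb
open Finset

lemma zeroCountVec_le {m : ℕ} (x : Fin m → Bool) : zeroCountVec x ≤ m := by
  classical
  exact (Finset.card_filter_le _ _).trans (by simp)

lemma zeroCountVec_comp_perm {m : ℕ} (x : Fin m → Bool) (π : Equiv.Perm (Fin m)) :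
    zeroCountVec (x ∘ π) = zeroCountVec x := by
  classical
  refine Finset.card_equiv π (fun i => ?_)
  simp [zeroCountVec]

lemma zeroCountVec_zeroVec {m j : ℕ} (h : j ≤ m) : zeroCountVec (zeroVec m j) = j := by
  classical
  have e : (Finset.univ.filter fun i : Fin m => zeroVec m j i = false)
      = Finset.univ.filter (fun i : Fin m => (i : ℕ) < j) := by
    ext i; simp [zeroVec, Nat.lt_iff_le_pred, Nat.not_le, -Finset.mem_filter]
  show _ = j
  rw [zeroCountVec, e]
  have e2 : Finset.univ.filter (fun i : Fin m => (i : ℕ) < j)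
      = Finset.image (Fin.castLE h) Finset.univ := by
    ext i
    simp only [Finset.mem_filter, Finset.mem_univ, true_and, Finset.mem_image]
    constructor
    · intro hi; exact ⟨⟨(i : ℕ), hi⟩, by ext; rfl⟩
    · rintro ⟨a, rfl⟩; exact a.2
  rw [e2, Finset.card_image_of_injective _ (Fin.castLE_injective h), Finset.card_univ,
    Fintype.card_fin]

lemma exists_perm_comp_eq {m : ℕ} (x y : Fin m → Bool)
    (h : zeroCountVec x = zeroCountVec y) : ∃ π : Equiv.Perm (Fin m), x ∘ π = y := by
  classical
  set A := Finset.univ.filter (fun i => y i = false) with hA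
  set B := Finset.univ.filter (fun i => x i = false) with hB
  have hcard : A.card = B.card := h.symm
  have hccard : Aᶜ.card = Bᶜ.card := by
    simp [Finset.card_compl, hcard]
  let e : {i // i ∈ A} ≃ {i // i ∈ B} := Finset.equivOfCardEq hcard
  let f : {i // ¬ i ∈ A} ≃ {i // ¬ i ∈ B} :=
    ((Equiv.subtypeEquivRight (fun i => (Finset.mem_compl).symm)).trans
      (Finset.equivOfCardEq hccard)).trans
      (Equiv.subtypeEquivRight (fun i => Finset.mem_compl))
  refine ⟨Equiv.subtypeCongr e f, ?_⟩
  funext i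
  by_cases hi : i ∈ A
  · have h1 : (Equiv.subtypeCongr e f) i = (e ⟨i, hi⟩ : Fin m) := by
      simp [Equiv.subtypeCongr, hi]
    have h2 : (e ⟨i, hi⟩ : Fin m) ∈ B := (e ⟨i, hi⟩).2
    have h3 : x ((e ⟨i, hi⟩ : Fin m)) = false := by
      simpa using (Finset.mem_filter.mp h2).2
    have h4 : y i = false := by simpa using (Finset.mem_filter.mp hi).2
    simp [Function.comp, h1, h3, h4]
  · have h1 : (Equiv.subtypeCongr e f) i = (f ⟨i, hi⟩ : Fin m) := by
      simp [Equiv.subtypeCongr, hi]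
    have h2 : ¬ ((f ⟨i, hi⟩ : Fin m) ∈ B) := (f ⟨i, hi⟩).2
    have h3 : x ((f ⟨i, hi⟩ : Fin m)) = true := by
      have := fun hf => h2 (Finset.mem_filter.mpr ⟨Finset.mem_univ _, hf⟩)
      simpa using this
    have h4 : y i = true := by
      have := fun hf => hi (Finset.mem_filter.mpr ⟨Finset.mem_univ _, hf⟩)
      simpa using this
    simp [Function.comp, h1, h3, h4]

end Comb
open Finset

lemma symmFun_factor {k : ℕ} {φ : (Fin k → Bool) → ℝ} (hφ : SymmFun φ) (y : Fin k → Bool) :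
    φ y = φ (zeroVec k (zeroCountVec y)) := by
  obtain ⟨π, hπ⟩ := exists_perm_comp_eq (zeroVec k (zeroCountVec y)) y
    (by rw [zeroCountVec_zeroVec (zeroCountVec_le y)])
  conv_lhs => rw [← hπ]
  exact hφ π _

lemma zeroCountVec_comp_strictMono {n k : ℕ} (x : Fin n → Bool) {u : Fin k → Fin n}
    (hu : StrictMono u) :
    zeroCountVec (x ∘ u)
      = ((Finset.image u Finset.univ) ∩ (Finset.univ.filter fun i => x i = false)).card := by
  classical
  rw [zeroCountVec, ← Finset.card_image_of_injective _ hu.injective]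
  congr 1
  ext b
  simp only [Finset.mem_image, Finset.mem_inter, Finset.mem_filter, Finset.mem_univ, true_and,
    Function.comp]
  aesop

lemma card_strictMono_count {n k j : ℕ} (hj : j ≤ k) (x : Fin n → Bool) :
    (Finset.univ.filter fun u : Fin k → Fin n => StrictMono u ∧ zeroCountVec (x ∘ u) = j).card
      = (zeroCountVec x).choose j * (n - zeroCountVec x).choose (k - j) := by
  classical
  set B := Finset.univ.filter (fun i : Fin n => x i = false) with hB
  have hcardB : B.card = zeroCountVec x := rfl
  have main : (Finset.univ.filter fun u : Fin k → Fin n =>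
        StrictMono u ∧ zeroCountVec (x ∘ u) = j).card
      = ((B.powersetCard j) ×ˢ (Bᶜ.powersetCard (k - j))).card := by
    apply Finset.card_nbij
      (fun u => (Finset.image u Finset.univ ∩ B, Finset.image u Finset.univ \ B))
    · intro u hu
      simp only [Finset.coe_filter, Set.mem_setOf_eq, Finset.mem_filter, Finset.mem_univ, true_and] at hu
      obtain ⟨hmono, hcnt⟩ := hu
      have himg : (Finset.image u Finset.univ).card = k := by
        rw [Finset.card_image_of_injective _ hmono.injective, Finset.card_univ,
          Fintype.card_fin]
      have hint : (Finset.image u Finset.univ ∩ B).card = j := by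
        rw [← hcnt, zeroCountVec_comp_strictMono x hmono]
      have hsd : (Finset.image u Finset.univ \ B).card = k - j := by
        have := Finset.card_inter_add_card_sdiff (Finset.image u Finset.univ) B
        omega
      rw [Finset.mem_coe, Finset.mem_product]
      constructor
      · rw [Finset.mem_powersetCard]; exact ⟨Finset.inter_subset_right, hint⟩
      · rw [Finset.mem_powersetCard]
        refine ⟨fun b hb => ?_, hsd⟩
        rw [Finset.mem_compl]
        exact (Finset.mem_sdiff.mp hb).2
    · intro u1 hu1 u2 hu2 heq
      simp only [Finset.coe_filter, Set.mem_setOf_eq, Finset.mem_univ, true_and] at hu1 hu2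
      have himg : Finset.image u1 Finset.univ = Finset.image u2 Finset.univ := by
        have h1 := congrArg Prod.fst heq
        have h2 := congrArg Prod.snd heq
        simp only at h1 h2
        ext b
        by_cases hb : b ∈ B
        · constructor
          · intro hm
            have : b ∈ Finset.image u1 Finset.univ ∩ B := Finset.mem_inter.mpr ⟨hm, hb⟩
            rw [h1] at this; exact (Finset.mem_inter.mp this).1
          · intro hm
            have : b ∈ Finset.image u2 Finset.univ ∩ B := Finset.mem_inter.mpr ⟨hm, hb⟩
            rw [← h1] at this; exact (Finset.mem_inter.mp this).1
        · constructor
          · intro hm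
            have : b ∈ Finset.image u1 Finset.univ \ B := Finset.mem_sdiff.mpr ⟨hm, hb⟩
            rw [h2] at this; exact (Finset.mem_sdiff.mp this).1
          · intro hm
            have : b ∈ Finset.image u2 Finset.univ \ B := Finset.mem_sdiff.mpr ⟨hm, hb⟩
            rw [← h2] at this; exact (Finset.mem_sdiff.mp this).1
      have hcard : (Finset.image u1 Finset.univ).card = k := by
        rw [Finset.card_image_of_injective _ hu1.1.injective, Finset.card_univ, Fintype.card_fin]
      have e1 := Finset.orderEmbOfFin_unique hcard (f := u1)
        (fun i => Finset.mem_image_of_mem _ (Finset.mem_univ i)) hu1.1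
      have hcard2 : (Finset.image u2 Finset.univ).card = k := by rw [← himg]; exact hcard
      have e2 := Finset.orderEmbOfFin_unique hcard (f := u2)
        (fun i => by rw [himg]; exact Finset.mem_image_of_mem _ (Finset.mem_univ i)) hu2.1
      rw [e1, e2]
    · rintro ⟨a, b⟩ hab
      simp only [Finset.coe_product, Set.mem_prod, Finset.mem_coe,
        Finset.mem_powersetCard] at hab
      obtain ⟨⟨haB, haj⟩, hbB, hbj⟩ := hab
      have hdisj : Disjoint a b := by
        rw [Finset.disjoint_left]
        intro e hea heb
        exact (Finset.mem_compl.mp (hbB heb)) (haB hea)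
      have hcardu : (a ∪ b).card = k := by
        rw [Finset.card_union_of_disjoint hdisj, haj, hbj]; omega
      refine ⟨(a ∪ b).orderEmbOfFin hcardu, ?_, ?_⟩
      · have hmono := ((a ∪ b).orderEmbOfFin hcardu).strictMono
        have himg : Finset.image ((a ∪ b).orderEmbOfFin hcardu) Finset.univ = a ∪ b := by
          apply Finset.coe_inj.mp
          rw [Finset.coe_image, Finset.coe_univ, Set.image_univ, Finset.range_orderEmbOfFin]
        simp only [Finset.coe_filter, Set.mem_setOf_eq, Finset.mem_univ, true_and]
        refine ⟨hmono, ?_⟩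
        rw [zeroCountVec_comp_strictMono x hmono, himg, ← hB]
        have : (a ∪ b) ∩ B = a := by
          ext e
          simp only [Finset.mem_inter, Finset.mem_union]
          constructor
          · rintro ⟨he1 | he1, he2⟩
            · exact he1
            · exact absurd he2 (Finset.mem_compl.mp (hbB he1))
          · intro he; exact ⟨Or.inl he, haB he⟩
        rw [this, haj]
      · have himg : Finset.image ((a ∪ b).orderEmbOfFin hcardu) Finset.univ = a ∪ b := by
          apply Finset.coe_inj.mp
          rw [Finset.coe_image, Finset.coe_univ, Set.image_univ, Finset.range_orderEmbOfFin]
        have h1 : (a ∪ b) ∩ B = a := by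
          ext e
          simp only [Finset.mem_inter, Finset.mem_union]
          constructor
          · rintro ⟨he1 | he1, he2⟩
            · exact he1
            · exact absurd he2 (Finset.mem_compl.mp (hbB he1))
          · intro he; exact ⟨Or.inl he, haB he⟩
        have h2 : (a ∪ b) \ B = b := by
          ext e
          simp only [Finset.mem_sdiff, Finset.mem_union]
          constructor
          · rintro ⟨he1 | he1, he2⟩
            · exact absurd (haB he1) he2
            · exact he1
          · intro he
            exact ⟨Or.inr he, Finset.mem_compl.mp (hbB he)⟩
        simp only
        rw [himg, h1, h2]
  rw [main, Finset.card_product, Finset.card_powersetCard, Finset.card_powersetCard,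
    Finset.card_compl, Fintype.card_fin, hcardB]


/-- coefficient `N(c,j)` -/
noncomputable def Ncoef (n k c j : ℕ) : ℝ := ((c.choose j) * ((n - c).choose (k - j)) : ℕ)

/-- value of the `U`-statistic on a configuration with given zero pattern -/
noncomputable def Gk (n k : ℕ) (φ : (Fin k → Bool) → ℝ) (c : ℕ) : ℝ :=
  ∑ j ∈ Finset.range (k + 1), φ (zeroVec k j) * Ncoef n k c j

lemma sum_strictMono_eq {n k : ℕ} (x : Fin n → Bool) (φ : (Fin k → Bool) → ℝ)
    (hφ : SymmFun φ) :
    (∑ u : Fin k → Fin n, if StrictMono u then φ (x ∘ u) else 0)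
      = Gk n k φ (zeroCountVec x) := by
  classical
  rw [← Finset.sum_filter]
  have h1 : ∀ u ∈ Finset.univ.filter (fun u : Fin k → Fin n => StrictMono u),
      φ (x ∘ u) = φ (zeroVec k (zeroCountVec (x ∘ u))) := fun u _ => symmFun_factor hφ _
  rw [Finset.sum_congr rfl h1]
  have hmaps : ∀ u ∈ Finset.univ.filter (fun u : Fin k → Fin n => StrictMono u),
      (fun u : Fin k → Fin n => zeroCountVec (x ∘ u)) u ∈ Finset.range (k + 1) :=
    fun u _ => Finset.mem_range.mpr (Nat.lt_succ_of_le (zeroCountVec_le _))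
  rw [← Finset.sum_fiberwise_of_maps_to hmaps
    (fun u : Fin k → Fin n => φ (zeroVec k (zeroCountVec (x ∘ u))))]
  unfold Gk
  refine Finset.sum_congr rfl (fun j hj => ?_)
  have h2 : ∀ u ∈ (Finset.univ.filter (fun u : Fin k → Fin n => StrictMono u)).filter
      (fun u => zeroCountVec (x ∘ u) = j),
      φ (zeroVec k (zeroCountVec (x ∘ u))) = φ (zeroVec k j) := by
    intro u hu
    rw [(Finset.mem_filter.mp hu).2]
  rw [Finset.sum_congr rfl h2, Finset.sum_const, Finset.filter_filter]
  rw [card_strictMono_count (Nat.lt_succ_iff.mp (Finset.mem_range.mp hj)) x]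
  unfold Ncoef
  push_cast
  ring


section MeasureBridge

variable {Ω : Type} [MeasurableSpace Ω]

lemma cylProb_nonneg (X : ℕ → Ω → Bool) (μ : Measure Ω) {n : ℕ} (x : Fin n → Bool) :
    0 ≤ cylProb X μ x := ENNReal.toReal_nonneg

lemma measurable_cylSet (X : ℕ → Ω → Bool) (hX : ∀ i, Measurable (X i)) {n : ℕ}
    (x : Fin n → Bool) : MeasurableSet {ω | ∀ i : Fin n, X (i : ℕ) ω = x i} := by
  have : {ω | ∀ i : Fin n, X (i : ℕ) ω = x i}
      = ⋂ i : Fin n, (X (i : ℕ)) ⁻¹' {x i} := by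
    ext ω; simp [Set.mem_iInter]
  rw [this]
  exact MeasurableSet.iInter fun i => (hX _) (measurableSet_singleton _)

lemma integral_comp_vec (X : ℕ → Ω → Bool) (hX : ∀ i, Measurable (X i))
    (μ : Measure Ω) [IsProbabilityMeasure μ] (n : ℕ) (f : (Fin n → Bool) → ℝ) :
    ∫ ω, f (fun i : Fin n => X (i : ℕ) ω) ∂μ = ∑ x : Fin n → Bool, f x * cylProb X μ x := by
  have hv : Measurable (fun ω (i : Fin n) => X (i : ℕ) ω) :=
    measurable_pi_lambda _ fun i => hX i
  have hpm : IsProbabilityMeasure (μ.map (fun ω (i : Fin n) => X (i : ℕ) ω)) :=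
    Measure.isProbabilityMeasure_map hv.aemeasurable
  rw [← MeasureTheory.integral_map hv.aemeasurable
    (measurable_of_countable f).aestronglyMeasurable]
  rw [MeasureTheory.integral_fintype (Integrable.of_finite)]
  refine Finset.sum_congr rfl fun x _ => ?_
  rw [smul_eq_mul, mul_comm]
  congr 1
  unfold Measure.real
  rw [Measure.map_apply hv (measurableSet_singleton x)]
  unfold cylProb
  have : (fun ω (i : Fin n) => X (i : ℕ) ω) ⁻¹' {x}
      = {ω | ∀ i : Fin n, X (i : ℕ) ω = x i} := by
    ext ω; simp [funext_iff]
  rw [this]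

/-- total weight of configurations with `c` zeros -/
noncomputable def qw (X : ℕ → Ω → Bool) (μ : Measure Ω) (n c : ℕ) : ℝ :=
  ∑ x ∈ Finset.univ.filter (fun x : Fin n → Bool => zeroCountVec x = c), cylProb X μ x

lemma qw_nonneg (X : ℕ → Ω → Bool) (μ : Measure Ω) (n c : ℕ) : 0 ≤ qw X μ n c :=
  Finset.sum_nonneg fun x _ => cylProb_nonneg X μ x

lemma sum_config_eq (X : ℕ → Ω → Bool) (μ : Measure Ω) (n : ℕ) (F : ℕ → ℝ) :
    ∑ x : Fin n → Bool, F (zeroCountVec x) * cylProb X μ x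
      = ∑ c ∈ Finset.range (n + 1), F c * qw X μ n c := by
  classical
  have hmaps : ∀ x ∈ (Finset.univ : Finset (Fin n → Bool)),
      zeroCountVec x ∈ Finset.range (n + 1) :=
    fun x _ => Finset.mem_range.mpr (Nat.lt_succ_of_le (zeroCountVec_le x))
  rw [← Finset.sum_fiberwise_of_maps_to hmaps
    (fun x : Fin n → Bool => F (zeroCountVec x) * cylProb X μ x)]
  refine Finset.sum_congr rfl fun c _ => ?_
  rw [qw, Finset.mul_sum]
  refine Finset.sum_congr rfl fun x hx => ?_
  rw [(Finset.mem_filter.mp hx).2]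

lemma ustat_pointwise (X : ℕ → Ω → Bool) (n : ℕ) {k : ℕ} (φ : (Fin k → Bool) → ℝ)
    (hφ : SymmFun φ) (ω : Ω) :
    Ustat X n φ ω = Gk n k φ (zeroCountVec (fun i : Fin n => X (i : ℕ) ω)) := by
  have h := sum_strictMono_eq (fun i : Fin n => X (i : ℕ) ω) φ hφ
  exact h

lemma integral_ustat_mul (X : ℕ → Ω → Bool) (hX : ∀ i, Measurable (X i))
    (μ : Measure Ω) [IsProbabilityMeasure μ] (n : ℕ) {k l : ℕ}
    (φ : (Fin k → Bool) → ℝ) (hφ : SymmFun φ) (ψ : (Fin l → Bool) → ℝ) (hψ : SymmFun ψ) :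
    ∫ ω, Ustat X n φ ω * Ustat X n ψ ω ∂μ
      = ∑ c ∈ Finset.range (n + 1), (Gk n k φ c * Gk n l ψ c) * qw X μ n c := by
  have h1 : ∀ ω, Ustat X n φ ω * Ustat X n ψ ω
      = (fun x : Fin n → Bool => Gk n k φ (zeroCountVec x) * Gk n l ψ (zeroCountVec x))
          (fun i : Fin n => X (i : ℕ) ω) := by
    intro ω
    simp only [ustat_pointwise X n φ hφ ω, ustat_pointwise X n ψ hψ ω]
  calc ∫ ω, Ustat X n φ ω * Ustat X n ψ ω ∂μ
      = ∫ ω, (fun x : Fin n → Bool => Gk n k φ (zeroCountVec x) * Gk n l ψ (zeroCountVec x))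
          (fun i : Fin n => X (i : ℕ) ω) ∂μ := by
        exact integral_congr_ae (Filter.Eventually.of_forall h1)
    _ = ∑ x : Fin n → Bool, (Gk n k φ (zeroCountVec x) * Gk n l ψ (zeroCountVec x))
          * cylProb X μ x := integral_comp_vec X hX μ n
            (fun x => Gk n k φ (zeroCountVec x) * Gk n l ψ (zeroCountVec x))
    _ = _ := sum_config_eq X μ n (fun c => Gk n k φ c * Gk n l ψ c)

lemma integral_ustat_sq (X : ℕ → Ω → Bool) (hX : ∀ i, Measurable (X i))
    (μ : Measure Ω) [IsProbabilityMeasure μ] (n : ℕ) {k : ℕ}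
    (φ : (Fin k → Bool) → ℝ) (hφ : SymmFun φ) :
    ∫ ω, (Ustat X n φ ω) ^ 2 ∂μ
      = ∑ c ∈ Finset.range (n + 1), (Gk n k φ c * Gk n k φ c) * qw X μ n c := by
  have : ∀ ω, (Ustat X n φ ω) ^ 2 = Ustat X n φ ω * Ustat X n φ ω := fun ω => sq _
  rw [integral_congr_ae (Filter.Eventually.of_forall this)]
  exact integral_ustat_mul X hX μ n φ hφ φ hφ

lemma cylProb_comp_perm {X : ℕ → Ω → Bool} {μ : Measure Ω}
    (hexch : Exchangeable X μ) {n : ℕ} (π : Equiv.Perm (Fin n)) (x : Fin n → Bool) :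
    cylProb X μ (x ∘ π) = cylProb X μ x := by
  have key : ∀ (σ : Equiv.Perm (Fin n)) (y : Fin n → Bool),
      cylProb X μ (y ∘ σ.symm) = cylProb X μ y := by
    intro σ y
    have hm1 : Measurable (fun ω (i : Fin n) => X ((σ i : Fin n) : ℕ) ω) :=
      measurable_pi_lambda _ fun i => hexch.1 _
    have hm2 : Measurable (fun ω (i : Fin n) => X ((i : Fin n) : ℕ) ω) :=
      measurable_pi_lambda _ fun i => hexch.1 _
    have hS : MeasurableSet {v : Fin n → Bool | ∀ i, v i = y i} := by
      have : {v : Fin n → Bool | ∀ i, v i = y i} = {y} := by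
        ext v; simp [funext_iff]
      rw [this]; exact measurableSet_singleton y
    have h := congrArg (fun m : Measure (Fin n → Bool) =>
      m {v : Fin n → Bool | ∀ i, v i = y i}) (hexch.2 n σ)
    simp only [Measure.map_apply hm1 hS, Measure.map_apply hm2 hS] at h
    have e1 : (fun ω (i : Fin n) => X ((σ i : Fin n) : ℕ) ω) ⁻¹'
        {v : Fin n → Bool | ∀ i, v i = y i}
        = {ω | ∀ i : Fin n, X (i : ℕ) ω = (y ∘ σ.symm) i} := by
      ext ω
      simp only [Set.mem_preimage, Set.mem_setOf_eq, Function.comp_apply]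
      constructor
      · intro hh i
        have := hh (σ.symm i)
        simpa using this
      · intro hh i
        have := hh (σ i)
        simpa using this
    have e2 : (fun ω (i : Fin n) => X ((i : Fin n) : ℕ) ω) ⁻¹'
        {v : Fin n → Bool | ∀ i, v i = y i}
        = {ω | ∀ i : Fin n, X (i : ℕ) ω = y i} := rfl
    rw [e1, e2] at h
    unfold cylProb
    rw [h]
  have := key π.symm x
  simpa using this

end MeasureBridge

section LinAlg
open Polynomial

/-- the power vector `c ↦ c^i` on `{0,…,n}` -/
noncomputable def powv (n : ℕ) (i : ℕ) : Fin (n + 1) → ℝ := fun c => ((c : ℕ) : ℝ) ^ i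

/-- the basic `U`-statistic profile vectors -/
noncomputable def Nvec (n k : ℕ) (j : Fin (k + 1)) : Fin (n + 1) → ℝ :=
  fun c => Ncoef n k (c : ℕ) (j : ℕ)

lemma evalVec_mem_span_powv {n k : ℕ} (p : ℝ[X]) (hp : p.natDegree ≤ k) :
    (fun c : Fin (n + 1) => p.eval ((c : ℕ) : ℝ))
      ∈ Submodule.span ℝ (Set.range (fun j : Fin (k + 1) => powv n (j : ℕ))) := by
  have hfun : (fun c : Fin (n + 1) => p.eval ((c : ℕ) : ℝ))
      = ∑ j : Fin (k + 1), p.coeff (j : ℕ) • powv n (j : ℕ) := by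
    funext c
    rw [Polynomial.eval_eq_sum_range' (Nat.lt_succ_of_le hp)]
    rw [← Fin.sum_univ_eq_sum_range (fun i => p.coeff i * ((c : ℕ) : ℝ) ^ i) (k + 1)]
    rw [Finset.sum_apply]
    refine Finset.sum_congr rfl fun j _ => ?_
    simp [powv]
  rw [hfun]
  exact Submodule.sum_mem _ fun j _ => Submodule.smul_mem _ _
    (Submodule.subset_span ⟨j, rfl⟩)

lemma Ncoef_eval {n k c j : ℕ} (hc : c ≤ n) :
    Ncoef n k c j
      = ((descPochhammer ℝ j).eval ((c : ℕ) : ℝ) / (j.factorial : ℝ))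
        * ((descPochhammer ℝ (k - j)).eval ((n : ℝ) - (c : ℝ)) / ((k - j).factorial : ℝ)) := by
  have h1 : (descPochhammer ℝ j).eval ((c : ℕ) : ℝ) = (c.descFactorial j : ℝ) := by
    exact_mod_cast descPochhammer_eval_eq_descFactorial ℝ c j
  have h2 : (descPochhammer ℝ (k - j)).eval ((n : ℝ) - (c : ℝ))
      = ((n - c).descFactorial (k - j) : ℝ) := by
    rw [← Nat.cast_sub hc]
    exact_mod_cast descPochhammer_eval_eq_descFactorial ℝ (n - c) (k - j)
  rw [h1, h2, Nat.descFactorial_eq_factorial_mul_choose, Nat.descFactorial_eq_factorial_mul_choose]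
  unfold Ncoef
  have hj : (j.factorial : ℝ) ≠ 0 := Nat.cast_ne_zero.mpr (Nat.factorial_ne_zero j)
  have hkj : ((k - j).factorial : ℝ) ≠ 0 := Nat.cast_ne_zero.mpr (Nat.factorial_ne_zero (k - j))
  push_cast
  field_simp
  try ring

lemma Nvec_mem_span_powv {n k : ℕ} (j : Fin (k + 1)) :
    Nvec n k j ∈ Submodule.span ℝ (Set.range (fun i : Fin (k + 1) => powv n (i : ℕ))) := by
  classical
  set p : ℝ[X] :=
    Polynomial.C ((1 : ℝ) / ((j : ℕ).factorial : ℝ) / (((k : ℕ) - (j : ℕ)).factorial : ℝ))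
      * (descPochhammer ℝ (j : ℕ)
        * ((descPochhammer ℝ (k - (j : ℕ))).comp (Polynomial.C ((n : ℕ) : ℝ) - Polynomial.X)))
    with hp
  have hdeg : p.natDegree ≤ k := by
    refine le_trans (Polynomial.natDegree_mul_le) ?_
    have h0 : (Polynomial.C ((1 : ℝ) / ((j : ℕ).factorial : ℝ)
        / (((k : ℕ) - (j : ℕ)).factorial : ℝ))).natDegree = 0 := Polynomial.natDegree_C _
    rw [h0, zero_add]
    refine le_trans (Polynomial.natDegree_mul_le) ?_
    have hd1 : (descPochhammer ℝ (j : ℕ)).natDegree = (j : ℕ) := descPochhammer_natDegree ℝ _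
    have hd2 : ((descPochhammer ℝ (k - (j : ℕ))).comp
        (Polynomial.C ((n : ℕ) : ℝ) - Polynomial.X)).natDegree ≤ k - (j : ℕ) := by
      refine le_trans (Polynomial.natDegree_comp_le) ?_
      have : (Polynomial.C ((n : ℕ) : ℝ) - Polynomial.X).natDegree ≤ 1 := by
        refine le_trans (Polynomial.natDegree_sub_le _ _) ?_
        simp [Polynomial.natDegree_C, Polynomial.natDegree_X]
      calc (descPochhammer ℝ (k - (j : ℕ))).natDegree
            * (Polynomial.C ((n : ℕ) : ℝ) - Polynomial.X).natDegree
          ≤ (descPochhammer ℝ (k - (j : ℕ))).natDegree * 1 := Nat.mul_le_mul_left _ this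
        _ = k - (j : ℕ) := by rw [mul_one, descPochhammer_natDegree ℝ]
    have hjk : (j : ℕ) ≤ k := Nat.lt_succ_iff.mp j.2
    omega
  have hval : Nvec n k j = fun c : Fin (n + 1) => p.eval ((c : ℕ) : ℝ) := by
    funext c
    have hc : (c : ℕ) ≤ n := Nat.lt_succ_iff.mp c.2
    rw [Nvec, Ncoef_eval hc, hp]
    simp only [Polynomial.eval_mul, Polynomial.eval_C, Polynomial.eval_comp,
      Polynomial.eval_sub, Polynomial.eval_X]
    field_simp
    try ring
  rw [hval]
  exact evalVec_mem_span_powv p hdeg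

lemma linearIndependent_powv {n k : ℕ} (hk : k ≤ n) :
    LinearIndependent ℝ (fun j : Fin (k + 1) => powv n (j : ℕ)) := by
  rw [Fintype.linearIndependent_iff]
  intro g hg
  set p : ℝ[X] := ∑ i : Fin (k + 1), Polynomial.C (g i) * Polynomial.X ^ (i : ℕ) with hpdef
  have hdeg : p.natDegree ≤ k := by
    refine le_trans (Polynomial.natDegree_sum_le _ _) ?_
    rw [Finset.fold_max_le]
    refine ⟨Nat.zero_le _, fun i _ => ?_⟩
    refine le_trans (Polynomial.natDegree_C_mul_le _ _) ?_
    rw [Polynomial.natDegree_X_pow]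
    exact Nat.lt_succ_iff.mp i.2
  have heval : ∀ c : Fin (n + 1), p.eval ((c : ℕ) : ℝ) = 0 := by
    intro c
    have := congrFun hg c
    simp only [Finset.sum_apply, Pi.smul_apply, smul_eq_mul, Pi.zero_apply, powv] at this
    rw [hpdef]
    simp only [Polynomial.eval_finset_sum, Polynomial.eval_mul, Polynomial.eval_C,
      Polynomial.eval_pow, Polynomial.eval_X]
    exact this
  have hinj : Function.Injective (fun c : Fin (n + 1) => ((c : ℕ) : ℝ)) := by
    intro a b hab
    exact Fin.ext (Nat.cast_injective hab)
  have hp0 : p = 0 := by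
    refine Polynomial.eq_zero_of_natDegree_lt_card_of_eval_eq_zero p hinj heval ?_
    rw [Fintype.card_fin]
    omega
  intro j
  have hcoeff := congrArg (fun q : ℝ[X] => q.coeff (j : ℕ)) hp0
  simp only [hpdef, Polynomial.finset_sum_coeff, Polynomial.coeff_C_mul,
    Polynomial.coeff_X_pow, Polynomial.coeff_zero, mul_ite, mul_one, mul_zero] at hcoeff
  rw [Finset.sum_eq_single j] at hcoeff
  · simpa using hcoeff
  · intro b _ hb
    rw [if_neg]
    exact fun hh => hb (Fin.ext hh.symm)
  · intro hj
    exact absurd (Finset.mem_univ j) hj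

lemma linearIndependent_Nvec {n k : ℕ} (hk : k ≤ n) :
    LinearIndependent ℝ (Nvec n k) := by
  rw [Fintype.linearIndependent_iff]
  intro g hg
  by_contra hne
  push_neg at hne
  obtain ⟨j1, hj1⟩ := hne
  classical
  have hSne : (Finset.univ.filter fun j : Fin (k + 1) => g j ≠ 0).Nonempty :=
    ⟨j1, by simp [hj1]⟩
  set j0 := (Finset.univ.filter fun j : Fin (k + 1) => g j ≠ 0).min' hSne with hj0def
  have hj0mem := (Finset.univ.filter fun j : Fin (k + 1) => g j ≠ 0).min'_mem hSne
  have hgj0 : g j0 ≠ 0 := (Finset.mem_filter.mp hj0mem).2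
  have hj0n : (j0 : ℕ) ≤ n := le_trans (Nat.lt_succ_iff.mp j0.2) hk
  have hc : Fin (n + 1) := ⟨(j0 : ℕ), Nat.lt_succ_of_le hj0n⟩
  have heval := congrFun hg ⟨(j0 : ℕ), Nat.lt_succ_of_le hj0n⟩
  simp only [Finset.sum_apply, Pi.smul_apply, smul_eq_mul, Pi.zero_apply] at heval
  have hterm : ∀ j : Fin (k + 1), j ≠ j0 →
      g j * Nvec n k j ⟨(j0 : ℕ), Nat.lt_succ_of_le hj0n⟩ = 0 := by
    intro j hj
    rcases lt_or_gt_of_ne hj with h | h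
    · -- j < j0 : g j = 0 by minimality
      have : g j = 0 := by
        by_contra hgj
        have : j0 ≤ j := Finset.min'_le _ j (by simp [hgj])
        exact absurd h (not_lt.mpr this)
      rw [this, zero_mul]
    · -- j > j0 : choose vanishes
      have : Nvec n k j ⟨(j0 : ℕ), Nat.lt_succ_of_le hj0n⟩ = 0 := by
        unfold Nvec Ncoef
        have : (j0 : ℕ).choose (j : ℕ) = 0 := Nat.choose_eq_zero_of_lt h
        simp [this]
      rw [this, mul_zero]
  rw [Finset.sum_eq_single j0] at heval
  · have hNpos : Nvec n k j0 ⟨(j0 : ℕ), Nat.lt_succ_of_le hj0n⟩ ≠ 0 := by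
      have hj0k : (j0 : ℕ) ≤ k := Nat.lt_succ_iff.mp j0.2
      have h2 : ((n - (j0 : ℕ)).choose (k - (j0 : ℕ)) : ℝ) ≠ 0 :=
        Nat.cast_ne_zero.mpr (Nat.choose_pos (by omega)).ne'
      simpa [Nvec, Ncoef, Nat.choose_self] using h2
    exact hgj0 (by
      rcases mul_eq_zero.mp heval with h | h
      · exact h
      · exact absurd h hNpos)
  · intro b _ hb; exact hterm b hb
  · intro hj; exact absurd (Finset.mem_univ j0) hj

lemma span_Nvec_eq_span_powv {n k : ℕ} (hk : k ≤ n) :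
    Submodule.span ℝ (Set.range (Nvec n k))
      = Submodule.span ℝ (Set.range (fun i : Fin (k + 1) => powv n (i : ℕ))) := by
  have hle : Submodule.span ℝ (Set.range (Nvec n k))
      ≤ Submodule.span ℝ (Set.range (fun i : Fin (k + 1) => powv n (i : ℕ))) := by
    rw [Submodule.span_le]
    rintro v ⟨j, rfl⟩
    exact Nvec_mem_span_powv j
  refine Submodule.eq_of_le_of_finrank_le hle ?_
  rw [finrank_span_eq_card (linearIndependent_powv hk),
    finrank_span_eq_card (linearIndependent_Nvec hk)]

end LinAlg

section Weighted

open Finset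

/-- multiplication by `√q` as a linear map into Euclidean space -/
noncomputable def Lmap {n : ℕ} (q : Fin (n + 1) → ℝ) :
    (Fin (n + 1) → ℝ) →ₗ[ℝ] EuclideanSpace ℝ (Fin (n + 1)) where
  toFun f := WithLp.toLp 2 (fun c => Real.sqrt (q c) * f c)
  map_add' f g := by ext c; simp [mul_add]
  map_smul' a f := by ext c; simp [smul_eq_mul]; ring

lemma inner_Lmap {n : ℕ} (q : Fin (n + 1) → ℝ) (hq : ∀ c, 0 ≤ q c)
    (f g : Fin (n + 1) → ℝ) :
    (inner ℝ (Lmap q f) (Lmap q g) : ℝ) = ∑ c : Fin (n + 1), f c * g c * q c := by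
  rw [PiLp.inner_apply]
  refine Finset.sum_congr rfl fun c _ => ?_
  simp only [Lmap, LinearMap.coe_mk, AddHom.coe_mk, RCLike.inner_apply, conj_trivial]
  calc Real.sqrt (q c) * g c * (Real.sqrt (q c) * f c)
      = Real.sqrt (q c) * Real.sqrt (q c) * (f c * g c) := by ring
    _ = f c * g c * q c := by rw [Real.mul_self_sqrt (hq c)]; ring

/-- the profile vector of a kernel -/
noncomputable def Gvec (n k : ℕ) (φ : (Fin k → Bool) → ℝ) : Fin (n + 1) → ℝ :=
  fun c => Gk n k φ (c : ℕ)

lemma Gvec_eq_sum (n k : ℕ) (φ : (Fin k → Bool) → ℝ) :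
    Gvec n k φ = ∑ j : Fin (k + 1), φ (zeroVec k (j : ℕ)) • Nvec n k j := by
  funext c
  rw [Gvec, Gk, ← Fin.sum_univ_eq_sum_range
    (fun j => φ (zeroVec k j) * Ncoef n k (c : ℕ) j) (k + 1), Finset.sum_apply]
  refine Finset.sum_congr rfl fun j _ => ?_
  simp [Nvec]

lemma Gvec_mem_span (n k : ℕ) (φ : (Fin k → Bool) → ℝ) :
    Gvec n k φ ∈ Submodule.span ℝ (Set.range (Nvec n k)) := by
  rw [Gvec_eq_sum]
  exact Submodule.sum_mem _ fun j _ => Submodule.smul_mem _ _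
    (Submodule.subset_span ⟨j, rfl⟩)

lemma exists_symm_of_mem_span {n k : ℕ} {g : Fin (n + 1) → ℝ}
    (hg : g ∈ Submodule.span ℝ (Set.range (Nvec n k))) :
    ∃ φ : (Fin k → Bool) → ℝ, SymmFun φ ∧ Gvec n k φ = g := by
  rw [Submodule.mem_span_range_iff_exists_fun] at hg
  obtain ⟨a, ha⟩ := hg
  refine ⟨fun x => a ⟨zeroCountVec x, Nat.lt_succ_of_le (zeroCountVec_le x)⟩, ?_, ?_⟩
  · intro π x
    simp only [zeroCountVec_comp_perm x π]
  · rw [Gvec_eq_sum, ← ha]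
    refine Finset.sum_congr rfl fun j _ => ?_
    congr 1
    have : zeroCountVec (zeroVec k (j : ℕ)) = (j : ℕ) :=
      zeroCountVec_zeroVec (Nat.lt_succ_iff.mp j.2)
    simp only [this]

variable {Ω : Type} [MeasurableSpace Ω]

lemma inner_L_Gvec (X : ℕ → Ω → Bool) (hX : ∀ i, Measurable (X i))
    (μ : Measure Ω) [IsProbabilityMeasure μ] (n : ℕ) {k l : ℕ}
    (φ : (Fin k → Bool) → ℝ) (hφ : SymmFun φ) (ψ : (Fin l → Bool) → ℝ) (hψ : SymmFun ψ) :
    (inner ℝ (Lmap (fun c : Fin (n + 1) => qw X μ n (c : ℕ)) (Gvec n k φ))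
      (Lmap (fun c : Fin (n + 1) => qw X μ n (c : ℕ)) (Gvec n l ψ)) : ℝ)
      = ∫ ω, Ustat X n φ ω * Ustat X n ψ ω ∂μ := by
  rw [inner_Lmap _ (fun c => qw_nonneg X μ n (c : ℕ)), integral_ustat_mul X hX μ n φ hφ ψ hψ,
    ← Fin.sum_univ_eq_sum_range (fun c => (Gk n k φ c * Gk n l ψ c) * qw X μ n c) (n + 1)]
  rfl

lemma inner_L_Gvec_self (X : ℕ → Ω → Bool) (hX : ∀ i, Measurable (X i))
    (μ : Measure Ω) [IsProbabilityMeasure μ] (n : ℕ) {k : ℕ}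
    (φ : (Fin k → Bool) → ℝ) (hφ : SymmFun φ) :
    (inner ℝ (Lmap (fun c : Fin (n + 1) => qw X μ n (c : ℕ)) (Gvec n k φ))
      (Lmap (fun c : Fin (n + 1) => qw X μ n (c : ℕ)) (Gvec n k φ)) : ℝ)
      = ∫ ω, (Ustat X n φ ω) ^ 2 ∂μ := by
  rw [inner_L_Gvec X hX μ n φ hφ φ hφ]
  refine integral_congr_ae (Filter.Eventually.of_forall fun ω => ?_)
  simp only []
  rw [sq]

end Weighted

section EvalVec
open Polynomial

lemma evalVec_eq_sum {n k : ℕ} (p : Polynomial ℝ) (hp : p.natDegree ≤ k) :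
    (fun c : Fin (n + 1) => p.eval ((c : ℕ) : ℝ))
      = ∑ j : Fin (k + 1), p.coeff (j : ℕ) • powv n (j : ℕ) := by
  funext c
  rw [Polynomial.eval_eq_sum_range' (Nat.lt_succ_of_le hp)]
  rw [← Fin.sum_univ_eq_sum_range (fun i => p.coeff i * ((c : ℕ) : ℝ) ^ i) (k + 1)]
  rw [Finset.sum_apply]
  refine Finset.sum_congr rfl fun j _ => ?_
  simp [powv]

lemma Lmap_apply {n : ℕ} (q : Fin (n + 1) → ℝ) (f : Fin (n + 1) → ℝ) (c : Fin (n + 1)) :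
    Lmap q f c = Real.sqrt (q c) * f c := rfl

end EvalVec

/-- An infinite exchangeable `{0,1}`-valued sequence is non-deterministic
(every finite configuration has positive probability, equivalently its de Finetti measure
is not supported in `{0} ∪ {1}`) if and only if `SH_k(X_{[n]}) ≠ {0}` for every `n ≥ 2`
and every `k = 1,…,n`. -/
theorem nonDeterministic_iff_SH_nontrivial
    {Ω : Type} [MeasurableSpace Ω] (μ : Measure Ω) [IsProbabilityMeasure μ]
    (X : ℕ → Ω → Bool) (hexch : Exchangeable X μ) :
    NonDeterministic X μ ↔ SHNontrivial X μ := by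
  classical
  have hXm : ∀ i, Measurable (X i) := hexch.1
  constructor
  · -- forward direction
    intro hND n hn2 k hk1 hkn
    set q : Fin (n + 1) → ℝ := fun c => qw X μ n (c : ℕ) with hqdef
    have hqpos : ∀ c : Fin (n + 1), 0 < q c := by
      intro c
      have hc : (c : ℕ) ≤ n := Nat.lt_succ_iff.mp c.2
      have hmem : zeroVec n (c : ℕ) ∈ Finset.univ.filter
          (fun x : Fin n → Bool => zeroCountVec x = (c : ℕ)) := by
        simp [zeroCountVec_zeroVec hc]
      refine Finset.sum_pos' (fun x _ => cylProb_nonneg X μ x) ⟨_, hmem, ?_⟩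
      exact hND n (le_trans one_le_two hn2) (zeroVec n (c : ℕ))
    have hLinj : Function.Injective (Lmap q) := by
      intro f g hfg
      funext c
      have hc := congrFun (congrArg WithLp.ofLp hfg) c
      rw [Lmap_apply, Lmap_apply] at hc
      exact mul_left_cancel₀ (Real.sqrt_ne_zero'.mpr (hqpos c)) hc
    set A : Submodule ℝ (EuclideanSpace ℝ (Fin (n + 1))) :=
      Submodule.map (Lmap q) (Submodule.span ℝ (Set.range (Nvec n (k - 1)))) with hAdef
    have hk1n : k - 1 ≤ n := by omega
    have hAB : Submodule.span ℝ (Set.range (Nvec n (k - 1)))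
        = Submodule.span ℝ (Set.range (fun i : Fin (k - 1 + 1) => powv n (i : ℕ))) :=
      span_Nvec_eq_span_powv hk1n
    have hPind : LinearIndependent ℝ (fun j : Fin (k + 1) => powv n (j : ℕ)) :=
      linearIndependent_powv hkn
    have hrange_eq : Set.range (fun i : Fin (k - 1 + 1) => powv n (i : ℕ))
        = (fun j : Fin (k + 1) => powv n (j : ℕ)) '' {j | j ≠ Fin.last k} := by
      ext v
      constructor
      · rintro ⟨i, rfl⟩
        have hik : (i : ℕ) < k := by have := i.2; omega
        refine ⟨⟨(i : ℕ), by omega⟩, ?_, rfl⟩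
        intro hcon
        have : ((⟨(i : ℕ), by omega⟩ : Fin (k + 1)) : ℕ) = k := by rw [hcon]; rfl
        simp at this; omega
      · rintro ⟨j, hj, rfl⟩
        have hjk : (j : ℕ) < k := by
          have h1 : (j : ℕ) ≤ k := Nat.lt_succ_iff.mp j.2
          rcases lt_or_eq_of_le h1 with h | h
          · exact h
          · exact absurd (Fin.ext (by simp [h])) hj
        exact ⟨⟨(j : ℕ), by omega⟩, rfl⟩
    have hv_notmem : powv n k ∉ Submodule.span ℝ
        (Set.range (fun i : Fin (k - 1 + 1) => powv n (i : ℕ))) := by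
      rw [hrange_eq]
      have hnm := hPind.notMem_span_image (s := {j : Fin (k + 1) | j ≠ Fin.last k})
        (x := Fin.last k) (by simp)
      simpa [Fin.val_last] using hnm
    have hvA : Lmap q (powv n k) ∉ A := by
      intro hmem
      obtain ⟨g, hg, hLg⟩ := hmem
      rw [hAB] at hg
      exact hv_notmem (hLinj hLg ▸ hg)
    set v : EuclideanSpace ℝ (Fin (n + 1)) := Lmap q (powv n k) with hvdef
    set u : EuclideanSpace ℝ (Fin (n + 1)) := v - (A.orthogonalProjection v : _) with hudef
    have huA : u ∈ Aᗮ := Submodule.sub_starProjection_mem_orthogonal v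
    have hune : u ≠ 0 := by
      intro h0
      have hveq : v = (A.orthogonalProjection v : EuclideanSpace ℝ (Fin (n + 1))) := by
        rw [← sub_eq_zero]; exact h0
      exact hvA (hveq.symm ▸ Submodule.coe_mem (A.orthogonalProjection v))
    set B : Submodule ℝ (EuclideanSpace ℝ (Fin (n + 1))) :=
      Submodule.map (Lmap q) (Submodule.span ℝ (Set.range (Nvec n k))) with hBdef
    have hALB : A ≤ B := by
      refine Submodule.map_mono ?_
      rw [hAB, span_Nvec_eq_span_powv hkn]
      refine Submodule.span_mono ?_
      rintro w ⟨i, rfl⟩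
      exact ⟨⟨(i : ℕ), by have := i.2; omega⟩, rfl⟩
    have huB : u ∈ B := by
      refine Submodule.sub_mem _ ?_ (hALB (Submodule.coe_mem _))
      refine ⟨powv n k, ?_, rfl⟩
      rw [span_Nvec_eq_span_powv hkn]
      exact Submodule.subset_span ⟨⟨k, by omega⟩, rfl⟩
    obtain ⟨g, hg, hLg⟩ := huB
    obtain ⟨φ, hφsymm, hφg⟩ := exists_symm_of_mem_span hg
    have hLphi : Lmap q (Gvec n k φ) = u := by rw [hφg]; exact hLg
    refine ⟨φ, hφsymm, ?_, ?_⟩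
    · intro ψ hψ
      have hb := inner_L_Gvec X hXm μ n φ hφsymm ψ hψ
      rw [← hqdef] at hb
      rw [← hb, hLphi]
      have h2 : Lmap q (Gvec n (k - 1) ψ) ∈ A :=
        ⟨Gvec n (k - 1) ψ, Gvec_mem_span _ _ _, rfl⟩
      rw [real_inner_comm]
      exact (Submodule.mem_orthogonal A u).mp huA _ h2
    · have hb := inner_L_Gvec_self X hXm μ n φ hφsymm
      rw [← hqdef] at hb
      rw [← hb, hLphi]
      intro hzero
      exact hune (inner_self_eq_zero.mp hzero)
  · -- backward direction
    intro hSH n0 hn0 x0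
    by_contra hle
    have hx0 : cylProb X μ x0 = 0 := le_antisymm (not_lt.mp hle) (cylProb_nonneg X μ x0)
    set m := max n0 2 with hm
    have hm2 : 2 ≤ m := le_max_right _ _
    have hn0m : n0 ≤ m := le_max_left _ _
    set y : Fin m → Bool := fun i => if h : (i : ℕ) < n0 then x0 ⟨(i : ℕ), h⟩ else true with hy
    have hymeas0 : μ {ω | ∀ i : Fin m, X (i : ℕ) ω = y i} = 0 := by
      have hsub : {ω | ∀ i : Fin m, X (i : ℕ) ω = y i}
          ⊆ {ω | ∀ i : Fin n0, X (i : ℕ) ω = x0 i} := by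
        intro ω hω i
        have hi : (i : ℕ) < m := lt_of_lt_of_le i.2 hn0m
        have h1 := hω ⟨(i : ℕ), hi⟩
        rw [hy] at h1
        simpa [i.2] using h1
      refine measure_mono_null hsub ?_
      unfold cylProb at hx0
      rcases (ENNReal.toReal_eq_zero_iff _).mp hx0 with h | h
      · exact h
      · exact absurd h (measure_ne_top μ _)
    have hycyl : cylProb X μ y = 0 := by unfold cylProb; rw [hymeas0]; simp
    set c0 := zeroCountVec y with hc0
    have hc0m : c0 ≤ m := zeroCountVec_le y
    have hq0 : qw X μ m c0 = 0 := by
      rw [qw]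
      refine Finset.sum_eq_zero fun x hx => ?_
      obtain ⟨π, hπ⟩ := exists_perm_comp_eq x y
        (by rw [(Finset.mem_filter.mp hx).2, hc0])
      rw [← cylProb_comp_perm hexch π x, hπ, hycyl]
    obtain ⟨φ, hφsymm, horth, hne⟩ := hSH m hm2 m (by omega) le_rfl
    apply hne
    set q : Fin (m + 1) → ℝ := fun c => qw X μ m (c : ℕ) with hqdef
    set s : Finset ℕ := (Finset.range (m + 1)).erase c0 with hs
    set p : Polynomial ℝ := ∏ c ∈ s, (Polynomial.X - Polynomial.C ((c : ℕ) : ℝ)) with hp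
    have hmonic : p.Monic :=
      Polynomial.monic_prod_of_monic _ _ fun c _ => Polynomial.monic_X_sub_C _
    have hcard : s.card = m := by
      rw [hs, Finset.card_erase_of_mem (Finset.mem_range.mpr (by omega)), Finset.card_range]
      omega
    have hdeg : p.natDegree = m := by
      rw [hp, Polynomial.natDegree_prod _ _ (fun c _ => Polynomial.X_sub_C_ne_zero _)]
      simp only [Polynomial.natDegree_X_sub_C]
      rw [Finset.sum_const, hcard, smul_eq_mul, mul_one]
    have hLf : Lmap q (fun c : Fin (m + 1) => p.eval ((c : ℕ) : ℝ)) = 0 := by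
      ext c
      rw [Lmap_apply]
      by_cases hc : (c : ℕ) = c0
      · have hqc : q c = 0 := by rw [hqdef]; simp only; rw [hc, hq0]
        rw [hqc, Real.sqrt_zero, zero_mul]
        rfl
      · have hev : p.eval ((c : ℕ) : ℝ) = 0 := by
          rw [hp, Polynomial.eval_prod]
          refine Finset.prod_eq_zero
            (Finset.mem_erase.mpr ⟨hc, Finset.mem_range.mpr c.2⟩) ?_
          simp
        rw [hev, mul_zero]
        rfl
    have hdecomp : (fun c : Fin (m + 1) => p.eval ((c : ℕ) : ℝ))
        = ∑ j : Fin (m + 1), p.coeff (j : ℕ) • powv m (j : ℕ) :=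
      evalVec_eq_sum p hdeg.le
    have hsum : ∑ j : Fin (m + 1), p.coeff (j : ℕ) • Lmap q (powv m (j : ℕ)) = 0 := by
      rw [← hLf, hdecomp, map_sum]
      refine Finset.sum_congr rfl fun j _ => ?_
      rw [_root_.map_smul]
    set S : Set (EuclideanSpace ℝ (Fin (m + 1))) :=
      Set.range (fun j : Fin (m - 1 + 1) => Lmap q (powv m (j : ℕ))) with hS
    have hLpm : Lmap q (powv m m) ∈ Submodule.span ℝ S := by
      rw [← Finset.add_sum_erase _ _ (Finset.mem_univ (Fin.last m))] at hsum
      have hlast : p.coeff ((Fin.last m : Fin (m + 1)) : ℕ) = 1 := by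
        have := hmonic.coeff_natDegree
        rwa [hdeg, ← Fin.val_last m] at this
      rw [hlast, one_smul] at hsum
      have heq : Lmap q (powv m ((Fin.last m : Fin (m + 1)) : ℕ))
          = -∑ j ∈ Finset.univ.erase (Fin.last m), p.coeff (j : ℕ) • Lmap q (powv m (j : ℕ)) :=
        eq_neg_of_add_eq_zero_left hsum
      rw [Fin.val_last] at heq
      rw [heq]
      refine Submodule.neg_mem _ (Submodule.sum_mem _ fun j hj => Submodule.smul_mem _ _ ?_)
      have hjm : (j : ℕ) < m := by
        have h1 : (j : ℕ) ≤ m := Nat.lt_succ_iff.mp j.2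
        rcases lt_or_eq_of_le h1 with h | h
        · exact h
        · exact absurd (Fin.ext (by simp [h, Fin.val_last])) (Finset.mem_erase.mp hj).1
      exact Submodule.subset_span ⟨⟨(j : ℕ), by omega⟩, rfl⟩
    have horthS : ∀ z ∈ S, (inner ℝ (Lmap q (Gvec m m φ)) z : ℝ) = 0 := by
      rintro z ⟨j, rfl⟩
      have hpow_mem : powv m (j : ℕ)
          ∈ Submodule.span ℝ (Set.range (Nvec m (m - 1))) := by
        rw [span_Nvec_eq_span_powv (show m - 1 ≤ m by omega)]
        exact Submodule.subset_span ⟨j, rfl⟩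
      obtain ⟨ψ, hψsymm, hψg⟩ := exists_symm_of_mem_span hpow_mem
      have hb := inner_L_Gvec X hXm μ m φ hφsymm ψ hψsymm
      rw [← hqdef] at hb
      show (inner ℝ (Lmap q (Gvec m m φ)) (Lmap q (powv m (j : ℕ))) : ℝ) = 0
      rw [← hψg, hb]
      exact horth ψ hψsymm
    have hGmem : Lmap q (Gvec m m φ) ∈ Submodule.span ℝ S := by
      have h1 : Gvec m m φ ∈ Submodule.span ℝ (Set.range (Nvec m m)) := Gvec_mem_span m m φ
      rw [span_Nvec_eq_span_powv le_rfl] at h1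
      have h2 : Lmap q (Gvec m m φ) ∈ Submodule.map (Lmap q)
          (Submodule.span ℝ (Set.range (fun i : Fin (m + 1) => powv m (i : ℕ)))) :=
        ⟨_, h1, rfl⟩
      rw [Submodule.map_span] at h2
      have hgen : (Lmap q) '' Set.range (fun i : Fin (m + 1) => powv m (i : ℕ))
          ⊆ ↑(Submodule.span ℝ S) := by
        rintro z ⟨w, ⟨i, rfl⟩, rfl⟩
        show Lmap q (powv m (i : ℕ)) ∈ (Submodule.span ℝ S : Set _)
        by_cases him : (i : ℕ) = m
        · rw [him]; exact hLpm
        · have : (i : ℕ) < m := by have := i.2; omega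
          exact Submodule.subset_span ⟨⟨(i : ℕ), by omega⟩, rfl⟩
      exact Submodule.span_le.mpr hgen h2
    have hself : (inner ℝ (Lmap q (Gvec m m φ)) (Lmap q (Gvec m m φ)) : ℝ) = 0 := by
      have hall : ∀ z ∈ Submodule.span ℝ S, (inner ℝ (Lmap q (Gvec m m φ)) z : ℝ) = 0 := by
        intro z hz
        induction hz using Submodule.span_induction with
        | mem w hw => exact horthS w hw
        | zero => exact inner_zero_right _
        | add a b _ _ ha hb => rw [inner_add_right, ha, hb, add_zero]
        | smul r a _ ha => rw [real_inner_smul_right, ha, mul_zero]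
      exact hall _ hGmem
    have hfinal := inner_L_Gvec_self X hXm μ m φ hφsymm
    rw [← hqdef] at hfinal
    rw [← hfinal, hself]

end HoeffdingUrn
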